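/- Let n ∈ ℕ, let L ⊆ [n], and let m be the maximal integer such that [m] ⊆ L (that is, [m] ⊆ L and either m = n or m+1 ∉ L). If 2m > n − 1, then the double path P_{n,L} requires the nSSP. -/

import Mathlib

open Matrix

/-- `A` has the non-symmetric Strong Spectral Property (nSSP): the only matrix `X`
with `A ∘ X = O` (Hadamard product) and `A Xᵀ - Xᵀ A = O` is `X = O`. -/
def HasNSSP {V : Type*} [Fintype V] (A : Matrix V V ℝ) : Prop :=
  ∀ X : Matrix V V ℝ,
    (∀ i j, A i j * X i j = 0) → A * Xᵀ - Xᵀ * A = 0 → X = 0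

/-- `A ∈ M(G)`: the entry `A i j` is nonzero exactly when `(i,j)` is an arc of the digraph. -/
def MemPattern {V : Type*} (E : Set (V × V)) (A : Matrix V V ℝ) : Prop :=
  ∀ i j, A i j ≠ 0 ↔ (i, j) ∈ E

/-- The digraph with arc set `E` requires the nSSP. -/
def RequiresNSSP {V : Type*} [Fintype V] (E : Set (V × V)) : Prop :=
  ∀ A : Matrix V V ℝ, MemPattern E A → HasNSSP A

/-- The digraph with arc set `E` allows the nSSP. -/
def AllowsNSSP {V : Type*} [Fintype V] (E : Set (V × V)) : Prop :=
  ∃ A : Matrix V V ℝ, MemPattern E A ∧ HasNSSP A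

/-- Out-neighbourhood `N⁺_G[v]`. -/
def outNbhd {V : Type*} (E : Set (V × V)) (v : V) : Set V := {u | (v, u) ∈ E}

/-- In-neighbourhood `N⁻_G[v]`. -/
def inNbhd {V : Type*} (E : Set (V × V)) (v : V) : Set V := {w | (w, v) ∈ E}

/-- The double path `P_{n,L}` on `n` vertices (0-indexed by `Fin n`, so that the
vertex with 1-based label `ℓ` is `⟨ℓ-1, _⟩`), with loops exactly at vertices in `L`. -/
def doublePathE (n : ℕ) (L : Set (Fin n)) : Set (Fin n × Fin n) :=
  {q | q.1.val + 1 = q.2.val ∨ q.2.val + 1 = q.1.val ∨ (q.1 = q.2 ∧ q.1 ∈ L)}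


open Polynomial

noncomputable def recP (β γ δ : ℕ → ℝ) : ℕ → Polynomial ℝ × Polynomial ℝ
  | 0 => (0, 1)
  | (j+1) => ((recP β γ δ j).2,
      Polynomial.C (β j)⁻¹ * ((Polynomial.X - Polynomial.C (δ j)) * (recP β γ δ j).2
        - Polynomial.C (γ (j-1)) * (recP β γ δ j).1))

lemma aeval_transpose {n : ℕ} (A : Matrix (Fin n) (Fin n) ℝ) (p : Polynomial ℝ) :
    aeval Aᵀ p = (aeval A p)ᵀ := by
  induction p using Polynomial.induction_on' with
  | add p q hp hq => simp [hp, hq]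
  | monomial k a =>
      rw [aeval_monomial, aeval_monomial, ← Algebra.smul_def, ← Algebra.smul_def,
        transpose_smul, transpose_pow]

lemma aeval_comm {n : ℕ} (A Y : Matrix (Fin n) (Fin n) ℝ) (h : A * Y = Y * A)
    (p : Polynomial ℝ) : aeval A p * Y = Y * aeval A p := by
  have hc : Commute A Y := h
  induction p using Polynomial.induction_on' with
  | add p q hp hq => simp [add_mul, mul_add, hp, hq]
  | monomial k a =>
      rw [aeval_monomial, ← Algebra.smul_def, smul_mul_assoc, mul_smul_comm,
        (hc.pow_left k).eq]

lemma functional_vanish (M : Polynomial ℝ → ℝ)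
    (Madd : ∀ p q, M (p + q) = M p + M q)
    (Msmul : ∀ (c : ℝ) p, M (c • p) = c * M p)
    (hgen : ∀ d : ℕ, ∃ g : Polynomial ℝ, g.degree = d ∧ M g = 0) :
    ∀ p, M p = 0 := by
  have M0 : M 0 = 0 := by
    have := Msmul 0 0; simpa using this
  have key : ∀ d : ℕ, ∀ p : Polynomial ℝ, p ≠ 0 → p.natDegree = d → M p = 0 := by
    intro d
    induction d using Nat.strong_induction_on with
    | _ d IH =>
      intro p hp hd
      obtain ⟨g, hg, hMg⟩ := hgen d
      have hg0 : g ≠ 0 := by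
        intro h; rw [h, degree_zero] at hg; exact absurd hg (by simp)
      have hlcg : g.leadingCoeff ≠ 0 := leadingCoeff_ne_zero.mpr hg0
      set c := p.leadingCoeff / g.leadingCoeff with hc
      have hc0 : c ≠ 0 := div_ne_zero (leadingCoeff_ne_zero.mpr hp) hlcg
      have hdegp : p.degree = (d : WithBot ℕ) := by
        rw [degree_eq_natDegree hp, hd]
      have hdcg : (c • g).degree = p.degree := by
        rw [smul_eq_C_mul, degree_C_mul (by exact hc0), hg, hdegp]
      have hlc : p.leadingCoeff = (c • g).leadingCoeff := by
        rw [smul_eq_C_mul, leadingCoeff_mul, leadingCoeff_C, hc,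
          div_mul_cancel₀ _ hlcg]
      have hsub : (p - c • g).degree < p.degree :=
        degree_sub_lt hdcg.symm hp hlc
      have hMp : M p = M (p - c • g) + c * M g := by
        rw [← Msmul c g, ← Madd, sub_add_cancel]
      rw [hMp, hMg, mul_zero, add_zero]
      by_cases h0 : p - c • g = 0
      · rw [h0, M0]
      · have : (p - c • g).natDegree < d := by
          have h2 : (p - c • g).degree < p.degree := hsub
          have := natDegree_lt_natDegree h0 h2
          omega
        exact IH _ this _ h0 rfl
  intro p
  by_cases hp : p = 0
  · rw [hp, M0]
  · exact key p.natDegree p hp rfl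

open Fin.NatCast in
lemma colGen {n : ℕ} [NeZero n] (A : Matrix (Fin n) (Fin n) ℝ)
    (hfar : ∀ i j : Fin n, i.val + 1 < j.val → A i j = 0)
    (hfar' : ∀ i j : Fin n, j.val + 1 < i.val → A i j = 0)
    (hsub : ∀ i j : Fin n, j.val + 1 = i.val → A i j ≠ 0) :
    ∃ q : ℕ → Polynomial ℝ, ∀ j, j < n → (q j).degree = (j : WithBot ℕ) ∧
      ∀ t : Fin n, (aeval A (q j)) t 0 = if t.val = j then 1 else 0 := by
  set β : ℕ → ℝ := fun j => A (↑(j+1) : Fin n) (↑j : Fin n) with hβ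
  set γ : ℕ → ℝ := fun j => A (↑j : Fin n) (↑(j+1) : Fin n) with hγ
  set δ : ℕ → ℝ := fun j => A (↑j : Fin n) (↑j : Fin n) with hδ
  set P : ℕ → Polynomial ℝ × Polynomial ℝ := recP β γ δ with hP
  have main : ∀ j, j < n →
      ((P j).2.degree = (j : WithBot ℕ) ∧ (P j).1.degree < (j : WithBot ℕ)) ∧
      (∀ t : Fin n, (aeval A ((P j).2)) t 0 = if t.val = j then 1 else 0) ∧
      (∀ t : Fin n, (aeval A ((P j).1)) t 0 = if t.val + 1 = j then 1 else 0) := by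
    intro j
    induction j with
    | zero =>
        intro _
        refine ⟨⟨?_, ?_⟩, ?_, ?_⟩
        · show (1 : Polynomial ℝ).degree = _
          simp
        · show (0 : Polynomial ℝ).degree < _
          simp [degree_zero]
        · intro t
          show (aeval A (1:Polynomial ℝ)) t 0 = _
          rw [_root_.map_one, Matrix.one_apply]
          by_cases h : t = 0
          · simp [h]
          · have : t.val ≠ 0 := fun hv => h (Fin.ext hv)
            simp [h, this]
        · intro t
          show (aeval A (0:Polynomial ℝ)) t 0 = _
          simp
    | succ j IH =>
        intro hj1
        have hjn : j < n := by omega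
        obtain ⟨⟨hdeg2, hdeg1⟩, hcol2, hcol1⟩ := IH hjn
        have hvj : ((j : Fin n) : ℕ) = j := Fin.val_cast_of_lt hjn
        have hvj1 : ((↑(j+1) : Fin n) : ℕ) = j + 1 := Fin.val_cast_of_lt hj1
        have hβ0 : β j ≠ 0 := by
          apply hsub
          rw [hvj, hvj1]
        have hstep : P (j+1) = ((P j).2,
            C (β j)⁻¹ * ((X - C (δ j)) * (P j).2 - C (γ (j-1)) * (P j).1)) := rfl
        rw [hstep]
        -- degree facts
        have hdXv : ((X - C (δ j)) * (P j).2).degree = ((j+1 : ℕ) : WithBot ℕ) := by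
          rw [degree_mul, degree_X_sub_C, hdeg2]
          rw [show ((j+1:ℕ) : WithBot ℕ) = (1 : WithBot ℕ) + (j : WithBot ℕ) by
            push_cast; ring]
        have hdγu : (C (γ (j-1)) * (P j).1).degree < ((j+1 : ℕ) : WithBot ℕ) := by
          calc (C (γ (j-1)) * (P j).1).degree ≤ (C (γ (j-1))).degree + (P j).1.degree :=
                degree_mul_le _ _
            _ ≤ 0 + (P j).1.degree := add_le_add_left (degree_C_le) _
            _ = (P j).1.degree := zero_add _
            _ < (j : WithBot ℕ) := hdeg1
            _ < ((j+1:ℕ) : WithBot ℕ) := by exact_mod_cast Nat.lt_succ_self j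
        have hdsub : ((X - C (δ j)) * (P j).2 - C (γ (j-1)) * (P j).1).degree
            = ((j+1 : ℕ) : WithBot ℕ) := by
          rw [degree_sub_eq_left_of_degree_lt (by rw [hdXv]; exact hdγu), hdXv]
        constructor
        · constructor
          · show (C (β j)⁻¹ * _).degree = _
            rw [degree_C_mul (inv_ne_zero hβ0), hdsub]
          · show (P j).2.degree < _
            rw [hdeg2]; exact_mod_cast Nat.lt_succ_self j
        constructor
        · -- column of new second component
          intro t
          have expand : (aeval A (C (β j)⁻¹ * ((X - C (δ j)) * (P j).2 - C (γ (j-1)) * (P j).1))) t 0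
              = (β j)⁻¹ * (((A - algebraMap ℝ _ (δ j)) * aeval A ((P j).2)) t 0
                  - (γ (j-1)) * (aeval A ((P j).1)) t 0) := by
            rw [_root_.map_mul, _root_.map_sub, _root_.map_mul, _root_.map_mul, _root_.map_sub, aeval_X, aeval_C, aeval_C, aeval_C]
            rw [← Algebra.smul_def, ← Algebra.smul_def]
            simp [Matrix.sub_apply, Matrix.smul_apply, smul_eq_mul, mul_sub]
          rw [expand]
          set jF : Fin n := (↑j : Fin n) with hjF
          have hAcol : ((A - algebraMap ℝ _ (δ j)) * aeval A ((P j).2)) t 0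
              = A t jF - δ j * (if t.val = j then 1 else 0) := by
            rw [sub_mul, Matrix.sub_apply]
            congr 1
            · rw [Matrix.mul_apply]
              have : ∀ s : Fin n, A t s * (aeval A ((P j).2)) s 0
                  = if s = jF then A t s else 0 := by
                intro s
                rw [hcol2 s]
                by_cases h : s = jF
                · have : s.val = j := by rw [h]; exact hvj
                  simp [h, this, hvj]
                · have : s.val ≠ j := fun hv => h (Fin.ext (by rw [hv]; exact hvj.symm))
                  simp [h, this, hvj]
              rw [Finset.sum_congr rfl (fun s _ => this s), Finset.sum_ite_eq' Finset.univ]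
              simp
            · rw [← Algebra.smul_def, Matrix.smul_apply, hcol2 t, smul_eq_mul]
          rw [hAcol, hcol1 t]
          -- now case analysis on t.val vs j
          rcases lt_trichotomy t.val j with hlt | heq | hgt
          · rcases Nat.lt_or_ge (t.val + 1) j with h2 | h2
            · -- far below
              have hA0 : A t jF = 0 := hfar t _ (by rw [hvj]; omega)
              have e1 : t.val ≠ j := by omega
              have e2 : t.val + 1 ≠ j := by omega
              have e3 : t.val ≠ j + 1 := by omega
              simp [hA0, e1, e2, e3]
            · -- t.val + 1 = j
              have h3 : t.val + 1 = j := by omega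
              have hAg : A t jF = γ (j-1) := by
                rw [hγ, hjF]
                congr 1
                · exact Fin.ext (by rw [Fin.val_cast_of_lt (by omega : j - 1 < n)]; omega)
                · congr 1
                  omega
              have e1 : t.val ≠ j := by omega
              have e3 : t.val ≠ j + 1 := by omega
              simp [hAg, e1, h3, e3]
          · -- t.val = j
            have hAd : A t jF = δ j := by
              rw [hδ, hjF]
              congr 1
              exact Fin.ext (by rw [hvj]; omega)
            have e2 : t.val + 1 ≠ j := by omega
            have e3 : t.val ≠ j + 1 := by omega
            simp [hAd, heq, e2, e3]
          · rcases Nat.lt_or_ge (j + 1) t.val with h2 | h2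
            · -- far above
              have hA0 : A t jF = 0 := hfar' t _ (by rw [hvj]; omega)
              have e1 : t.val ≠ j := by omega
              have e2 : t.val + 1 ≠ j := by omega
              have e3 : t.val ≠ j + 1 := by omega
              simp [hA0, e1, e2, e3]
            · -- t.val = j + 1
              have h3 : t.val = j + 1 := by omega
              have hAb : A t jF = β j := by
                rw [hβ, hjF]
                congr 1
                exact Fin.ext (by rw [hvj1]; omega)
              have e1 : t.val ≠ j := by omega
              have e2 : t.val + 1 ≠ j := by omega
              have e4 : j + 1 + 1 ≠ j := by omega
              rw [hAb]
              simp [e1, e2, h3, e4, inv_mul_cancel₀ hβ0]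
        · -- column of new first component (= old second)
          intro t
          rw [hcol2 t]
          congr 1
          simp [Nat.succ_eq_add_one]
  exact ⟨fun j => (P j).2, fun j hj => ⟨(main j hj).1.1, (main j hj).2.1⟩⟩

lemma key {n m : ℕ} [NeZero n] (hnm : n ≤ 2*m) (A Y : Matrix (Fin n) (Fin n) ℝ)
    (hAY : A * Y = Y * A)
    (hfar : ∀ i j : Fin n, i.val + 1 < j.val → A i j = 0)
    (hfar' : ∀ i j : Fin n, j.val + 1 < i.val → A i j = 0)
    (hsub : ∀ i j : Fin n, j.val + 1 = i.val → A i j ≠ 0)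
    (hsup : ∀ i j : Fin n, i.val + 1 = j.val → A i j ≠ 0)
    (hY1 : ∀ i j : Fin n, i.val + 1 = j.val → Y i j = 0)
    (hYd : ∀ i : Fin n, i.val < m → Y i i = 0) : Y = 0 := by
  obtain ⟨q, hq⟩ := colGen A hfar hfar' hsub
  obtain ⟨r, hr⟩ := colGen Aᵀ
    (fun i j h => hfar' j i (by simpa using h))
    (fun i j h => hfar j i (by simpa using h))
    (fun i j h => hsup j i (by simpa using h))
  have hrdeg : ∀ i, i < n → (r i).degree = (i : WithBot ℕ) := fun i hi => (hr i hi).1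
  have hrow : ∀ i, i < n → ∀ t : Fin n,
      (aeval A (r i)) 0 t = if t.val = i then 1 else 0 := by
    intro i hi t
    have := (hr i hi).2 t
    rw [aeval_transpose, Matrix.transpose_apply] at this
    exact this
  set M : Polynomial ℝ → ℝ := fun p => (aeval A p * Y) 0 0 with hM
  have hMval : ∀ (i' j' : Fin n), M (r i'.val * q j'.val) = Y i' j' := by
    intro i' j'
    have hQcomm := aeval_comm A Y hAY (q j'.val)
    rw [hM]
    simp only
    rw [_root_.map_mul, mul_assoc, hQcomm]
    rw [Matrix.mul_apply]
    have h1 : ∀ t : Fin n, (aeval A (r i'.val)) 0 t * (Y * aeval A (q j'.val)) t 0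
        = if t = i' then (Y * aeval A (q j'.val)) t 0 else 0 := by
      intro t
      rw [hrow i'.val i'.2 t]
      by_cases h : t = i'
      · simp [h]
      · have : t.val ≠ i'.val := fun hv => h (Fin.ext hv)
        simp [h, this]
    rw [Finset.sum_congr rfl (fun t _ => h1 t), Finset.sum_ite_eq' Finset.univ]
    simp only [Finset.mem_univ, if_true]
    rw [Matrix.mul_apply]
    have h2 : ∀ s : Fin n, Y i' s * (aeval A (q j'.val)) s 0
        = if s = j' then Y i' s else 0 := by
      intro s
      rw [(hq j'.val j'.2).2 s]
      by_cases h : s = j'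
      · simp [h]
      · have : s.val ≠ j'.val := fun hv => h (Fin.ext hv)
        simp [h, this]
    rw [Finset.sum_congr rfl (fun s _ => h2 s), Finset.sum_ite_eq' Finset.univ]
    simp
  -- M is linear and vanishes on a polynomial of each degree
  have Mzero : ∀ p, M p = 0 := by
    apply functional_vanish
    · intro p p'
      simp [hM, _root_.map_add, add_mul, Matrix.add_apply]
    · intro c p
      simp [hM, _root_.map_smul, smul_mul_assoc, Matrix.smul_apply, smul_eq_mul]
    · intro d
      rcases Nat.lt_or_ge d n with hd | hd
      · rcases Nat.even_or_odd d with ⟨i, hi⟩ | ⟨i, hi⟩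
        · -- d = 2i even
          have hin : i < n := by omega
          have him : i < m := by omega
          refine ⟨r i * q i, ?_, ?_⟩
          · rw [degree_mul, hrdeg i hin, (hq i hin).1, ← Nat.cast_add]
            norm_cast
            omega
          · have := hMval ⟨i, hin⟩ ⟨i, hin⟩
            simp only [Fin.val_mk] at this
            rw [this]
            exact hYd ⟨i, hin⟩ him
        · -- d = 2i+1 odd
          have hin : i < n := by omega
          have hin1 : i + 1 < n := by omega
          refine ⟨r i * q (i+1), ?_, ?_⟩
          · rw [degree_mul, hrdeg i hin, (hq (i+1) hin1).1, ← Nat.cast_add]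
            norm_cast
            omega
          · have := hMval ⟨i, hin⟩ ⟨i+1, hin1⟩
            simp only [Fin.val_mk] at this
            rw [this]
            exact hY1 ⟨i, hin⟩ ⟨i+1, hin1⟩ rfl
      · -- d ≥ n : use charpoly
        refine ⟨A.charpoly * X ^ (d - n), ?_, ?_⟩
        · rw [degree_mul, Matrix.charpoly_degree_eq_dim, degree_X_pow, Fintype.card_fin,
            ← Nat.cast_add]
          norm_cast
          omega
        · simp [hM, _root_.map_mul, Matrix.aeval_self_charpoly]
  ext i' j'
  rw [Matrix.zero_apply, ← hMval i' j']
  exact Mzero _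

/-- if `m` is the maximal integer with `[m] ⊆ L` and `2m > n - 1`,
then the double path `P_{n,L}` requires the nSSP. Vertices are 0-indexed, so the 1-based
initial segment `[m]` is `{i | i.val < m}` and the 1-based vertex `m+1` has `val = m`. -/
theorem double_path_many_initial_loops_requires_nSSP {n m : ℕ} (hmn : m ≤ n)
    (L : Set (Fin n))
    (hL1 : ∀ i : Fin n, i.val < m → i ∈ L)
    (hmax : m = n ∨ ∀ i : Fin n, i.val = m → i ∉ L)
    (hbig : n - 1 < 2 * m) :
    RequiresNSSP (doublePathE n L) := by
  intro A hA X hXzero hAX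
  rcases Nat.eq_zero_or_pos n with hn0 | hn0
  · subst hn0
    ext i j
    exact absurd i.2 (by omega)
  · have : NeZero n := ⟨by omega⟩
    have hnm : n ≤ 2 * m := by omega
    set Y : Matrix (Fin n) (Fin n) ℝ := Xᵀ with hYdef
    have hAY : A * Y = Y * A := by
      have := sub_eq_zero.mp hAX
      exact this
    have hfar : ∀ i j : Fin n, i.val + 1 < j.val → A i j = 0 := by
      intro i j h
      by_contra hne
      have hm : (i.val + 1 = j.val) ∨ (j.val + 1 = i.val) ∨ (i = j ∧ i ∈ L) :=
        (hA i j).mp hne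
      rcases hm with h1 | h2 | ⟨h3, _⟩
      · omega
      · omega
      · have := congrArg Fin.val h3; omega
    have hfar' : ∀ i j : Fin n, j.val + 1 < i.val → A i j = 0 := by
      intro i j h
      by_contra hne
      have hm : (i.val + 1 = j.val) ∨ (j.val + 1 = i.val) ∨ (i = j ∧ i ∈ L) :=
        (hA i j).mp hne
      rcases hm with h1 | h2 | ⟨h3, _⟩
      · omega
      · omega
      · have := congrArg Fin.val h3; omega
    have hsub : ∀ i j : Fin n, j.val + 1 = i.val → A i j ≠ 0 := by
      intro i j h
      exact (hA i j).mpr (Or.inr (Or.inl h))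
    have hsup : ∀ i j : Fin n, i.val + 1 = j.val → A i j ≠ 0 := by
      intro i j h
      exact (hA i j).mpr (Or.inl h)
    have hY1 : ∀ i j : Fin n, i.val + 1 = j.val → Y i j = 0 := by
      intro i j h
      have hAji : A j i ≠ 0 := (hA j i).mpr (Or.inr (Or.inl h))
      have := hXzero j i
      rcases mul_eq_zero.mp this with h' | h'
      · exact absurd h' hAji
      · exact h'
    have hYd : ∀ i : Fin n, i.val < m → Y i i = 0 := by
      intro i h
      have hAii : A i i ≠ 0 := (hA i i).mpr (Or.inr (Or.inr ⟨rfl, hL1 i h⟩))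
      have := hXzero i i
      rcases mul_eq_zero.mp this with h' | h'
      · exact absurd h' hAii
      · exact h'
    have hY0 : Y = 0 := key hnm A Y hAY hfar hfar' hsub hsup hY1 hYd
    ext i j
    have := congrFun (congrFun hY0 j) i
    simpa [hYdef] using this
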